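/- Let X be a Tychonoff (completely regular T1) space such that the co-diagonal Δ^c_X = (X × X) \ Δ_X is discretely σ-compact, i.e. the closure in Δ^c_X of every discrete subset of Δ^c_X is σ-compact. Then X × X is hereditarily Lindelöf. -/

import Mathlib

open Set Topology Cardinal

open Classical

universe u

/-- The co-diagonal of `X`: the complement of the diagonal in `X × X`. -/
def codiag (X : Type u) [TopologicalSpace X] : Set (X × X) := {p | p.1 ≠ p.2}

/-- A space is discretely σ-compact if the closure of every discrete subset is
σ-compact. -/
def DiscretelySigmaCompact (Z : Type u) [TopologicalSpace Z] : Prop :=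
  ∀ D : Set Z, DiscreteTopology D → IsSigmaCompact (closure D)

set_option linter.unusedSectionVars false

namespace CodiagProof

section Index


/-- The index type: a well-ordered uncountable type all of whose initial segments
are countable (order type `ω₁`). -/
abbrev Idx : Type u := (Cardinal.aleph 1 : Cardinal.{u}).ord.ToType

lemma idx_iio_countable (i : Idx.{u}) : (Set.Iio i).Countable := by
  rw [Cardinal.countable_iff_lt_aleph_one]
  exact Cardinal.mk_Iio_ord_toType i

lemma idx_iic_countable (i : Idx.{u}) : (Set.Iic i).Countable := by
  have : Set.Iic i = Set.Iio i ∪ {i} := by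
    ext j; simp [le_iff_lt_or_eq]
  rw [this]
  exact (idx_iio_countable i).union (countable_singleton i)

lemma idx_not_countable : ¬ (Set.univ : Set Idx.{u}).Countable := by
  intro hc
  rw [Cardinal.countable_iff_lt_aleph_one, Cardinal.mk_univ, Cardinal.mk_ord_toType] at hc
  exact absurd hc (lt_irrefl _)

lemma exists_gt_of_countable {s : Set Idx.{u}} (hs : s.Countable) : ∃ j, ∀ i ∈ s, i < j := by
  by_contra hcon
  push_neg at hcon
  apply idx_not_countable.{u}
  have : (Set.univ : Set Idx.{u}) ⊆ ⋃ i ∈ s, Set.Iic i := by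
    intro j _
    obtain ⟨i, his, hij⟩ := hcon j
    exact Set.mem_biUnion his hij
  exact Set.Countable.mono this (hs.biUnion fun i _ => idx_iic_countable i)

end Index

section General

variable {β : Type u} [TopologicalSpace β]

variable {β : Type u} [TopologicalSpace β]

/-- From a non-Lindelöf set, extract an `ω₁`-right-separated sequence. -/
lemma exists_rightSep {t : Set β} (ht : ¬ IsLindelof t) :
    ∃ (p : Idx.{u} → β) (U : Idx.{u} → Set β), (∀ ξ, p ξ ∈ t) ∧ (∀ ξ, IsOpen (U ξ)) ∧
      (∀ ξ, p ξ ∈ U ξ) ∧ ∀ η ξ : Idx.{u}, η < ξ → p ξ ∉ U η := by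
  have hcov : ∃ (κ : Type u) (U : κ → Set β), (∀ i, IsOpen (U i)) ∧ (t ⊆ ⋃ i, U i) ∧
      ∀ r : Set κ, r.Countable → ¬ t ⊆ ⋃ i ∈ r, U i := by
    by_contra hno
    push_neg at hno
    exact ht (isLindelof_of_countable_subcover (fun {κ} U hU hsub => hno κ U hU hsub))
  obtain ⟨κ, U, hUo, hUc, hno⟩ := hcov
  have hpt : ∀ x ∈ t, ∃ i, x ∈ U i := fun x hx => Set.mem_iUnion.mp (hUc hx)
  have key2 : ∀ (ξ : Idx.{u}) (ih : ∀ η : Idx.{u}, η < ξ → κ),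
      ∃ x, x ∈ t ∧ ∀ η (h : η < ξ), x ∉ U (ih η h) := by
    intro ξ ih
    have hctble : (Set.range (fun z : (Set.Iio ξ) => ih z.1 z.2)).Countable := by
      have : Countable (Set.Iio ξ) := (idx_iio_countable ξ).to_subtype
      exact countable_range _
    have := hno _ hctble
    rw [Set.not_subset] at this
    obtain ⟨x, hx, hnx⟩ := this
    refine ⟨x, hx, fun η h hmem => hnx ?_⟩
    exact Set.mem_biUnion ⟨⟨η, h⟩, rfl⟩ hmem
  let wf : WellFounded ((· < ·) : Idx.{u} → Idx.{u} → Prop) := IsWellFounded.wf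
  let step : ∀ ξ : Idx.{u}, (∀ η, η < ξ → β × κ) → β × κ := fun ξ ih =>
    (Classical.choose (key2 ξ fun η h => (ih η h).2),
      Classical.choose (hpt _ (Classical.choose_spec (key2 ξ fun η h => (ih η h).2)).1))
  let f : Idx.{u} → β × κ := wf.fix step
  have hfix : ∀ ξ, f ξ = step ξ (fun η _ => f η) := fun ξ => wf.fix_eq step ξ
  have hspec : ∀ ξ : Idx.{u}, (f ξ).1 ∈ t ∧ (∀ η (h : η < ξ), (f ξ).1 ∉ U ((f η).2)) ∧
      (f ξ).1 ∈ U ((f ξ).2) := by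
    intro ξ
    have h1 := Classical.choose_spec (key2 ξ fun η (_ : η < ξ) => (f η).2)
    have h2 := Classical.choose_spec
      (hpt _ (Classical.choose_spec (key2 ξ fun η (_ : η < ξ) => (f η).2)).1)
    rw [hfix ξ]
    exact ⟨h1.1, h1.2, h2⟩
  refine ⟨fun ξ => (f ξ).1, fun ξ => U ((f ξ).2), fun ξ => (hspec ξ).1,
    fun ξ => hUo _, fun ξ => (hspec ξ).2.2, fun η ξ h => (hspec ξ).2.1 η h⟩

/-- An uncountable right-separated family is not Lindelöf. -/
lemma not_lindelof_of_rightSep {J : Set Idx.{u}} (hJ : ¬ J.Countable)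
    {p : Idx.{u} → β} {U : Idx.{u} → Set β}
    (hUo : ∀ ξ, IsOpen (U ξ)) (hmem : ∀ ξ ∈ J, p ξ ∈ U ξ)
    (hsep : ∀ η ∈ J, ∀ ξ ∈ J, η < ξ → p ξ ∉ U η) :
    ¬ IsLindelof (p '' J) := by
  intro hL
  classical
  set V : Idx.{u} → Set β := fun η => if η ∈ J then U η else ∅ with hV
  have hVo : ∀ η, IsOpen (V η) := by
    intro η; by_cases h : η ∈ J <;> simp [hV, h, hUo η]
  have hcov : p '' J ⊆ ⋃ η, V η := by
    rintro y ⟨ξ, hξ, rfl⟩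
    exact mem_iUnion.2 ⟨ξ, by simp [hV, hξ, hmem ξ hξ]⟩
  obtain ⟨r, hr, hsub⟩ := hL.elim_countable_subcover V hVo hcov
  apply hJ
  have hJsub : J ⊆ ⋃ η ∈ r, Set.Iic η := by
    intro ξ hξ
    have := hsub (Set.mem_image_of_mem p hξ)
    simp only [Set.mem_iUnion] at this
    obtain ⟨η, hηr, hy⟩ := this
    have hηJ : η ∈ J := by
      by_contra hn; simp [hV, hn] at hy
    rw [hV] at hy; simp only [if_pos hηJ] at hy
    have hnlt : ¬ η < ξ := fun hlt => hsep η hηJ ξ hξ hlt hy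
    exact Set.mem_biUnion hηr (not_lt.1 hnlt)
  exact ((hr.biUnion fun i _ => idx_iic_countable i).mono hJsub)

/-- The isolated points of a right-separated family are dense in it. -/
lemma subset_closure_iso {J : Set Idx.{u}} {p : Idx.{u} → β} {U : Idx.{u} → Set β}
    (hUo : ∀ ξ, IsOpen (U ξ)) (hmem : ∀ ξ ∈ J, p ξ ∈ U ξ)
    (hsep : ∀ η ∈ J, ∀ ξ ∈ J, η < ξ → p ξ ∉ U η) :
    (p '' J) ⊆ closure {a | a ∈ p '' J ∧ ∃ V, IsOpen V ∧ V ∩ p '' J = {a}} := by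
  intro x hx
  rw [mem_closure_iff]
  intro N hNo hxN
  have hne : {ξ | ξ ∈ J ∧ p ξ ∈ N}.Nonempty := by
    obtain ⟨ξ₀, h₀, rfl⟩ := hx; exact ⟨ξ₀, h₀, hxN⟩
  let wf : WellFounded ((· < ·) : Idx.{u} → Idx.{u} → Prop) := IsWellFounded.wf
  set η' := wf.min _ hne with hη'
  have hη'mem : η' ∈ J ∧ p η' ∈ N := wf.min_mem _ hne
  have hVeq : (N ∩ U η') ∩ p '' J = {p η'} := by
    apply Set.Subset.antisymm
    · rintro y ⟨⟨hyN, hyU⟩, ζ, hζ, rfl⟩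
      have h1 : ¬ ζ < η' := fun hlt => wf.not_lt_min _ (⟨hζ, hyN⟩ : ζ ∈ {ξ | ξ ∈ J ∧ p ξ ∈ N}) hlt
      have h2 : ¬ η' < ζ := fun hlt => hsep η' hη'mem.1 ζ hζ hlt hyU
      have : ζ = η' := le_antisymm (not_lt.1 h2) (not_lt.1 h1)
      rw [this]; rfl
    · rintro y (rfl : y = p η')
      exact ⟨⟨hη'mem.2, hmem η' hη'mem.1⟩, Set.mem_image_of_mem p hη'mem.1⟩
  exact ⟨p η', hη'mem.2, Set.mem_image_of_mem p hη'mem.1,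
    N ∩ U η', hNo.inter (hUo η'), hVeq⟩



lemma shrink_step [T2Space β] {C K : Set β} (hC : IsCompact C) (hK : IsCompact K)
    {P : Set β} (hPo : IsOpen P) (hKP : K ⊆ P) :
    ∃ V, IsOpen V ∧ K ⊆ V ∧ closure V ∩ C ⊆ P := by
  have hF : IsCompact (C \ P) := hC.diff hPo
  have hd : Disjoint K (C \ P) := by
    rw [Set.disjoint_left]; intro a haK ⟨_, hnP⟩; exact hnP (hKP haK)
  obtain ⟨A, B, hA, hB, hKA, hFB, hAB⟩ := SeparatedNhds.of_isCompact_isCompact hK hF hd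
  refine ⟨A, hA, hKA, ?_⟩
  rintro x ⟨hxA, hxC⟩
  by_contra hxP
  have hxB : x ∈ B := hFB ⟨hxC, hxP⟩
  have hcl : closure A ⊆ Bᶜ :=
    closure_minimal (fun a ha => Set.disjoint_left.mp hAB ha) (isClosed_compl_iff.2 hB)
  exact hcl hxA hxB

/-- In a T2 space, a compact set `K` which is the trace on a compact set `C` of a countable
intersection of open sets admits a countable relative neighborhood basis along `C`. -/
lemma rel_nbhd_basis [T2Space β] {C K : Set β} (hC : IsCompact C) (hK : IsCompact K)
    (W : ℕ → Set β) (hWo : ∀ n, IsOpen (W n)) (hKeq : K = C ∩ ⋂ n, W n) :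
    ∃ V : ℕ → Set β, (∀ n, IsOpen (V n)) ∧ (∀ n, K ⊆ V n) ∧
      ∀ U, IsOpen U → K ⊆ U → ∃ n, V n ∩ C ⊆ U := by
  classical
  have hKC : K ⊆ C := by rw [hKeq]; exact Set.inter_subset_left
  have hKW : ∀ n, K ⊆ W n := by
    intro n; rw [hKeq]; intro x hx; exact Set.mem_iInter.mp hx.2 n
  set W' : ℕ → Set β := fun n => ⋂ k ∈ Finset.range (n + 1), W k with hW'
  have hW'o : ∀ n, IsOpen (W' n) := fun n => isOpen_biInter_finset (fun k _ => hWo k)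
  have hKW' : ∀ n, K ⊆ W' n := by
    intro n x hx; exact Set.mem_biInter (fun k _ => hKW k hx)
  have step : ∀ (n : ℕ) (Vp : Set β), IsOpen Vp → K ⊆ Vp →
      ∃ V, (IsOpen V ∧ K ⊆ V) ∧ closure V ∩ C ⊆ Vp ∩ W' n := by
    intro n Vp hVpo hKVp
    obtain ⟨V, hVo, hKV, hVcl⟩ := shrink_step hC hK (hVpo.inter (hW'o n))
      (Set.subset_inter hKVp (hKW' n))
    exact ⟨V, ⟨hVo, hKV⟩, hVcl⟩
  let T : ℕ → {V : Set β // IsOpen V ∧ K ⊆ V} := fun n =>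
    Nat.rec (⟨choose (step 0 univ isOpen_univ (subset_univ K)),
        (choose_spec (step 0 univ isOpen_univ (subset_univ K))).1⟩)
      (fun m ih => ⟨choose (step (m + 1) ih.1 ih.2.1 ih.2.2),
        (choose_spec (step (m + 1) ih.1 ih.2.1 ih.2.2)).1⟩) n
  have hT0 : closure (T 0).1 ∩ C ⊆ W' 0 :=
    fun x hx => ((choose_spec (step 0 univ isOpen_univ (subset_univ K))).2 hx).2
  have hTs : ∀ m, closure (T (m + 1)).1 ∩ C ⊆ (T m).1 ∩ W' (m + 1) :=
    fun m => (choose_spec (step (m + 1) (T m).1 (T m).2.1 (T m).2.2)).2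
  have hTW : ∀ n, closure (T n).1 ∩ C ⊆ W' n := by
    intro n; cases n with
    | zero => exact hT0
    | succ m => exact fun x hx => (hTs m hx).2
  have hmono : ∀ m n, n ≤ m → (T m).1 ∩ C ⊆ (T n).1 ∩ C := by
    intro m
    induction m with
    | zero => intro n hn; rw [Nat.le_zero.mp hn]
    | succ m ih =>
      intro n hn
      rcases Nat.lt_or_ge n (m + 1) with hlt | hge
      · intro x hx
        have hx' : x ∈ (T m).1 ∩ C := ⟨(hTs m ⟨subset_closure hx.1, hx.2⟩).1, hx.2⟩
        exact ih n (Nat.lt_succ_iff.mp hlt) hx'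
      · rw [Nat.le_antisymm hn hge]
  refine ⟨fun n => (T n).1, fun n => (T n).2.1, fun n => (T n).2.2, ?_⟩
  intro U hUo hKU
  by_contra hbad
  push_neg at hbad
  have hx : ∀ n, ∃ x, x ∈ (T n).1 ∩ C ∧ x ∉ U := by
    intro n
    obtain ⟨x, hx1, hx2⟩ := Set.not_subset.mp (hbad n)
    exact ⟨x, hx1, hx2⟩
  choose x hx1 hx2 using hx
  have hCU : IsCompact (C \ U) := hC.diff hUo
  have hmap : Filter.map x Filter.atTop ≤ Filter.principal (C \ U) := by
    rw [Filter.le_principal_iff, Filter.mem_map]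
    exact Filter.Eventually.of_forall (fun n => ⟨(hx1 n).2, hx2 n⟩)
  obtain ⟨z, hz, hzc⟩ := hCU.exists_mapClusterPt hmap
  have hzcl : ∀ n, z ∈ closure ((T n).1 ∩ C) := by
    intro n
    have hmem : (T n).1 ∩ C ∈ Filter.map x Filter.atTop := by
      rw [Filter.mem_map]
      filter_upwards [Filter.mem_atTop n] with m hm
      exact hmono m n hm ⟨(hx1 m).1, (hx1 m).2⟩
    rw [mem_closure_iff_clusterPt]
    exact hzc.clusterPt.mono (Filter.le_principal_iff.2 hmem)
  have hzK : z ∈ K := by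
    rw [hKeq]
    refine ⟨hz.1, Set.mem_iInter.2 fun n => ?_⟩
    have : z ∈ W' n := hTW n ⟨closure_mono Set.inter_subset_left (hzcl n), hz.1⟩
    exact Set.mem_iInter₂.mp this n (Finset.self_mem_range_succ n)
  exact hz.2 (hKU hzK)


/-- A compact set whose relative co-diagonal is σ-compact admits a countable relative open
basis (Šneider-style metrization, in relative form). -/
lemma rel_countable_basis [T2Space β] [T1Space β] {C : Set β} (hC : IsCompact C)
    (Q : ℕ → Set (β × β)) (hQc : ∀ n, IsCompact (Q n))
    (hQeq : (C ×ˢ C) ∩ {p : β × β | p.1 ≠ p.2} = ⋃ n, Q n) :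
    ∃ B : Set (Set β), B.Countable ∧ (∀ b ∈ B, IsOpen b) ∧
      ∀ x ∈ C, ∀ U, IsOpen U → x ∈ U → ∃ b ∈ B, x ∈ b ∧ b ∩ C ⊆ U := by
  classical
  set C₂ : Set (β × β) := C ×ˢ C with hC₂
  have hC₂c : IsCompact C₂ := hC.prod hC
  set K : Set (β × β) := C₂ ∩ {p : β × β | p.1 = p.2} with hK
  have hKc : IsCompact K := hC₂c.inter_right (isClosed_diagonal (X := β))
  have hKeq : K = C₂ ∩ ⋂ n, (Q n)ᶜ := by
    ext p
    simp only [hK, Set.mem_inter_iff, Set.mem_setOf_eq, Set.mem_iInter, Set.mem_compl_iff]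
    constructor
    · rintro ⟨hp, he⟩
      refine ⟨hp, fun n hn => ?_⟩
      have : p ∈ (C ×ˢ C) ∩ {p : β × β | p.1 ≠ p.2} := by
        rw [hQeq]; exact Set.mem_iUnion.2 ⟨n, hn⟩
      exact this.2 he
    · rintro ⟨hp, hq⟩
      refine ⟨hp, by_contra fun hne => ?_⟩
      have : p ∈ ⋃ n, Q n := by rw [← hQeq]; exact ⟨hp, hne⟩
      obtain ⟨n, hn⟩ := Set.mem_iUnion.mp this
      exact hq n hn
  obtain ⟨V, hVo, hKV, hVbasis⟩ := rel_nbhd_basis hC₂c hKc (fun n => (Q n)ᶜ)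
    (fun n => (hQc n).isClosed.isOpen_compl) hKeq
  -- boxes inside each V n
  have hbox : ∀ (n : ℕ) (x : β), ∃ G : Set β, IsOpen G ∧ (x ∈ C → x ∈ G ∧ G ×ˢ G ⊆ V n) := by
    intro n x
    by_cases hx : x ∈ C
    · have hxK : ((x, x) : β × β) ∈ K := ⟨⟨hx, hx⟩, rfl⟩
      obtain ⟨u, v, hu, hv, hxu, hxv, huv⟩ := isOpen_prod_iff.mp (hVo n) x x (hKV n hxK)
      exact ⟨u ∩ v, hu.inter hv, fun _ => ⟨⟨hxu, hxv⟩, fun q hq => huv ⟨hq.1.1, hq.2.2⟩⟩⟩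
    · exact ⟨∅, isOpen_empty, fun hc => absurd hc hx⟩
  choose G hGo hGmem using hbox
  have hcover : ∀ n : ℕ, ∃ t : Set β, t ⊆ C ∧ t.Finite ∧ C ⊆ ⋃ y ∈ t, G n y := by
    intro n
    exact hC.elim_finite_subcover_image (fun y _ => hGo n y)
      (fun y hy => Set.mem_biUnion hy (hGmem n y hy).1)
  choose t ht1 ht2 ht3 using hcover
  refine ⟨⋃ n, (G n) '' (t n), countable_iUnion (fun n => ((ht2 n).image _).countable), ?_, ?_⟩
  · rintro b hb
    simp only [Set.mem_iUnion, Set.mem_image] at hb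
    obtain ⟨n, y, _, rfl⟩ := hb
    exact hGo n y
  · intro x hxC U hUo hxU
    set Wx : Set (β × β) := (({x} : Set β)ᶜ ×ˢ (univ : Set β)) ∪ ((univ : Set β) ×ˢ U) with hWx
    have hWxo : IsOpen Wx := ((isClosed_singleton.isOpen_compl).prod isOpen_univ).union
      (isOpen_univ.prod hUo)
    have hKWx : K ⊆ Wx := by
      rintro ⟨a, b⟩ ⟨hab, he⟩
      have he' : a = b := he
      by_cases hax : a = x
      · right
        refine Set.mem_prod.2 ⟨Set.mem_univ a, ?_⟩
        show b ∈ U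
        rw [← he', hax]; exact hxU
      · left
        refine Set.mem_prod.2 ⟨?_, Set.mem_univ b⟩
        simp only [Set.mem_compl_iff, Set.mem_singleton_iff]
        exact hax
    obtain ⟨n, hVn⟩ := hVbasis Wx hWxo hKWx
    obtain ⟨y, hyt, hxy⟩ := Set.mem_iUnion₂.mp (ht3 n hxC)
    refine ⟨G n y, Set.mem_iUnion.2 ⟨n, Set.mem_image_of_mem _ hyt⟩, hxy, ?_⟩
    intro z hz
    have hzV : ((x, z) : β × β) ∈ V n ∩ C₂ :=
      ⟨(hGmem n y (ht1 n hyt)).2 ⟨hxy, hz.1⟩, hxC, hz.2⟩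
    have := hVn hzV
    rcases this with h | h
    · exact absurd rfl h.1
    · exact h.2

/-- Subsets of a set with a countable relative basis are Lindelöf. -/
lemma lindelof_of_rel_basis {C : Set β} {B : Set (Set β)} (hBc : B.Countable)
    (hbasis : ∀ x ∈ C, ∀ U, IsOpen U → x ∈ U → ∃ b ∈ B, x ∈ b ∧ b ∩ C ⊆ U)
    {Y : Set β} (hY : Y ⊆ C) : IsLindelof Y := by
  classical
  apply isLindelof_of_countable_subcover
  intro κ U hUo hYU
  set B' : Set (Set β) := {b ∈ B | ∃ i, b ∩ C ⊆ U i} with hB'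
  have hB'c : B'.Countable := hBc.mono (Set.sep_subset _ _)
  have hsel : ∀ b : B', ∃ i, (b : Set β) ∩ C ⊆ U i := fun b => b.2.2
  choose f hf using hsel
  refine ⟨Set.range f, ?_, ?_⟩
  · have : Countable B' := hB'c.to_subtype
    exact countable_range f
  · intro y hy
    obtain ⟨i, hyU⟩ := Set.mem_iUnion.mp (hYU hy)
    obtain ⟨b, hbB, hyb, hbU⟩ := hbasis y (hY hy) (U i) (hUo i) hyU
    have hbB' : b ∈ B' := ⟨hbB, i, hbU⟩
    refine Set.mem_biUnion ⟨⟨b, hbB'⟩, rfl⟩ (hf ⟨b, hbB'⟩ ⟨hyb, hY hy⟩)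


end General

section Main


variable {X : Type u} [TopologicalSpace X] [T1Space X] [CompletelyRegularSpace X]

lemma t2X : T2Space X := by
  haveI : T3Space X := {}
  infer_instance

/-- Applying the discrete σ-compactness hypothesis to a subset of `X × X` contained in the
co-diagonal, all of whose points are isolated by ambient open sets. -/
lemma sigma_of_discrete_subset (h : DiscretelySigmaCompact ↥(codiag X))
    {E : Set (X × X)} (hE : E ⊆ codiag X)
    (hiso : ∀ e ∈ E, ∃ V, IsOpen V ∧ V ∩ E = {e}) :
    ∃ K : ℕ → Set (X × X), (∀ n, IsCompact (K n)) ∧ (∀ n, K n ⊆ codiag X) ∧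
      closure E ∩ codiag X = ⋃ n, K n := by
  classical
  set D : Set ↥(codiag X) := Subtype.val ⁻¹' E with hD
  have hdisc : DiscreteTopology ↥D := by
    rw [discreteTopology_iff_isOpen_singleton]
    rintro ⟨⟨z, hz⟩, hzD⟩
    have hzE : z ∈ E := hzD
    obtain ⟨V, hVo, hVE⟩ := hiso z hzE
    have : ({⟨⟨z, hz⟩, hzD⟩} : Set ↥D) =
        (fun w : ↥D => (w.1 : X × X)) ⁻¹' V := by
      ext w
      simp only [Set.mem_singleton_iff, Set.mem_preimage]
      constructor
      · rintro rfl
        have : z ∈ V ∩ E := by rw [hVE]; rfl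
        exact this.1
      · intro hwV
        have hwE : (w.1 : X × X) ∈ E := w.2
        have : (w.1 : X × X) ∈ V ∩ E := ⟨hwV, hwE⟩
        rw [hVE] at this
        apply Subtype.ext; apply Subtype.ext
        exact this
    rw [this]
    exact hVo.preimage ((continuous_subtype_val).comp continuous_subtype_val)
  obtain ⟨K', hK'c, hK'eq⟩ := h D hdisc
  refine ⟨fun n => Subtype.val '' K' n, fun n => (hK'c n).image continuous_subtype_val,
    fun n => ?_, ?_⟩
  · rintro p ⟨q, _, rfl⟩; exact q.2
  · have himg : Subtype.val '' (closure D) = closure E ∩ codiag X := by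
      have hDval : Subtype.val '' D = E := by
        rw [hD, Subtype.image_preimage_coe]
        exact Set.inter_eq_self_of_subset_right hE
      have hclD : closure D = Subtype.val ⁻¹' closure E := by
        ext w
        rw [closure_subtype, hDval]
        exact Iff.rfl
      rw [hclD, Subtype.image_preimage_coe]
      exact Set.inter_comm _ _
    rw [← himg, ← hK'eq, Set.image_iUnion]

/-- From a set `D` of isolated points of `X`, the off-diagonal pairs form a discrete subset of
the co-diagonal whose closure there is the full relative co-diagonal of `closure D`. -/
lemma pairs_lemma {D : Set X} (hiso : ∀ a ∈ D, ∃ V, IsOpen V ∧ V ∩ D = {a}) :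
    ((D ×ˢ D) ∩ codiag X ⊆ codiag X) ∧
    (∀ e ∈ (D ×ˢ D) ∩ codiag X, ∃ V, IsOpen V ∧ V ∩ ((D ×ˢ D) ∩ codiag X) = {e}) ∧
    closure ((D ×ˢ D) ∩ codiag X) ∩ codiag X = (closure D ×ˢ closure D) ∩ codiag X := by
  haveI := t2X (X := X)
  classical
  refine ⟨Set.inter_subset_right, ?_, ?_⟩
  · rintro ⟨a, b⟩ ⟨⟨haD, hbD⟩, hab⟩
    obtain ⟨Va, hVao, hVaD⟩ := hiso a haD
    obtain ⟨Vb, hVbo, hVbD⟩ := hiso b hbD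
    refine ⟨Va ×ˢ Vb, hVao.prod hVbo, ?_⟩
    apply Set.Subset.antisymm
    · rintro ⟨c, d⟩ ⟨⟨hcV, hdV⟩, ⟨hcD, hdD⟩, _⟩
      have hc : c ∈ Va ∩ D := ⟨hcV, hcD⟩
      have hd : d ∈ Vb ∩ D := ⟨hdV, hdD⟩
      rw [hVaD] at hc; rw [hVbD] at hd
      simp only [Set.mem_singleton_iff] at hc hd
      rw [hc, hd]; rfl
    · rintro q (rfl : q = (a, b))
      have ha : a ∈ Va := by
        have : a ∈ Va ∩ D := by rw [hVaD]; rfl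
        exact this.1
      have hb : b ∈ Vb := by
        have : b ∈ Vb ∩ D := by rw [hVbD]; rfl
        exact this.1
      exact ⟨⟨ha, hb⟩, ⟨haD, hbD⟩, hab⟩
  · apply Set.Subset.antisymm
    · apply Set.inter_subset_inter_left
      calc closure ((D ×ˢ D) ∩ codiag X) ⊆ closure (D ×ˢ D) :=
             closure_mono Set.inter_subset_left
        _ = closure D ×ˢ closure D := closure_prod_eq
    · rintro ⟨u, v⟩ ⟨⟨huD, hvD⟩, huv⟩
      refine ⟨?_, huv⟩
      rw [mem_closure_iff]
      intro N hNo hN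
      obtain ⟨P, Q, hPo, hQo, huP, hvQ, hPQ⟩ := t2_separation (huv : u ≠ v)
      obtain ⟨G, H, hGo, hHo, huG, hvH, hGH⟩ := isOpen_prod_iff.mp hNo u v hN
      obtain ⟨a, haGP, haD⟩ := mem_closure_iff.mp huD (G ∩ P) (hGo.inter hPo) ⟨huG, huP⟩
      obtain ⟨b, hbHQ, hbD⟩ := mem_closure_iff.mp hvD (H ∩ Q) (hHo.inter hQo) ⟨hvH, hvQ⟩
      have hne : a ≠ b := by
        intro hab
        exact Set.disjoint_left.mp hPQ haGP.2 (hab ▸ hbHQ.2)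
      exact ⟨(a, b), hGH ⟨haGP.1, hbHQ.1⟩, ⟨⟨haD, hbD⟩, hne⟩⟩


/-- Every subset of every compact subset of `X` is Lindelöf. -/
lemma compact_subsets_lindelof (h : DiscretelySigmaCompact ↥(codiag X))
    {C : Set X} (hC : IsCompact C) {Y : Set X} (hYC : Y ⊆ C) : IsLindelof Y := by
  haveI := t2X (X := X)
  classical
  by_contra hnl
  obtain ⟨p, U, hpt, hUo, hpU, hsep⟩ := exists_rightSep hnl
  set S : Set X := p '' (univ : Set Idx.{u}) with hS
  set D : Set X := {a | a ∈ S ∧ ∃ V, IsOpen V ∧ V ∩ S = {a}} with hD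
  have hsubcl : S ⊆ closure D := by
    rw [hS, hD]
    exact subset_closure_iso hUo (fun ξ _ => hpU ξ) (fun η _ ξ _ hlt => hsep η ξ hlt)
  have hDiso : ∀ a ∈ D, ∃ V, IsOpen V ∧ V ∩ D = {a} := by
    intro a ha
    obtain ⟨haS, V, hVo, hVS⟩ := ha
    refine ⟨V, hVo, Set.Subset.antisymm ?_ ?_⟩
    · intro y hy
      have : y ∈ V ∩ S := ⟨hy.1, hy.2.1⟩
      rw [hVS] at this; exact this
    · intro y hy
      rw [Set.mem_singleton_iff] at hy
      subst hy
      have haV : y ∈ V := by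
        have : y ∈ V ∩ S := by rw [hVS]; rfl
        exact this.1
      exact ⟨haV, haS, V, hVo, hVS⟩
  have hDY : D ⊆ Y := by
    intro a ha
    obtain ⟨ξ, -, rfl⟩ := ha.1
    exact hpt ξ
  have hC₀c : IsCompact (closure D) :=
    hC.of_isClosed_subset isClosed_closure (closure_minimal (hDY.trans hYC) hC.isClosed)
  -- pairs of distinct points of D are a discrete subset of the co-diagonal
  obtain ⟨hEsub, hEiso, hEcl⟩ := pairs_lemma (X := X) hDiso
  obtain ⟨K, hKc, hKsub, hKeq⟩ := sigma_of_discrete_subset h hEsub hEiso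
  rw [hEcl] at hKeq
  have hbasis := rel_countable_basis hC₀c K hKc (by rw [← hKeq]; rfl)
  obtain ⟨B, hBc, hBo, hB⟩ := hbasis
  have hSLin : IsLindelof S := lindelof_of_rel_basis hBc hB hsubcl
  exact not_lindelof_of_rightSep idx_not_countable hUo (fun ξ _ => hpU ξ)
    (fun η _ ξ _ hlt => hsep η ξ hlt) hSLin

/-- Relative `Gδ`-points in compact subsets of `X`. -/
lemma gdelta_rel_point (h : DiscretelySigmaCompact ↥(codiag X))
    {C : Set X} (hC : IsCompact C) {q : X} (hq : q ∈ C) :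
    ∃ W : ℕ → Set X, (∀ n, IsOpen (W n)) ∧ ({q} : Set X) = C ∩ ⋂ n, W n := by
  haveI := t2X (X := X)
  classical
  have hYL : IsLindelof (C \ {q}) := compact_subsets_lindelof h hC Set.diff_subset
  have hV : ∀ x : X, ∃ V : Set X, IsOpen V ∧ (x ∈ C \ {q} → x ∈ V) ∧ q ∉ closure V := by
    intro x
    by_cases hx : x ∈ C \ {q}
    · have hxq : x ≠ q := hx.2
      obtain ⟨A, B, hAo, hBo, hxA, hqB, hAB⟩ := t2_separation hxq
      refine ⟨A, hAo, fun _ => hxA, fun hqA => ?_⟩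
      have : closure A ⊆ Bᶜ :=
        closure_minimal (fun a ha => Set.disjoint_left.mp hAB ha) (isClosed_compl_iff.2 hBo)
      exact this hqA hqB
    · exact ⟨∅, isOpen_empty, fun hc => absurd hc hx, by simp⟩
  choose V hVo hVx hVq using hV
  have hcov : C \ {q} ⊆ ⋃ x, V x := fun x hx => Set.mem_iUnion.2 ⟨x, hVx x hx⟩
  obtain ⟨r, hr, hrsub⟩ := hYL.elim_countable_subcover V hVo hcov
  rcases Set.eq_empty_or_nonempty r with rfl | hrne
  · -- then C ⊆ {q}
    have : C \ {q} = ∅ := by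
      rw [Set.eq_empty_iff_forall_notMem]
      intro x hx
      simpa using hrsub hx
    refine ⟨fun _ => univ, fun _ => isOpen_univ, ?_⟩
    have hCq : C = {q} := by
      apply Set.Subset.antisymm
      · intro x hx
        by_contra hxq
        exact absurd (Set.mem_diff_of_mem hx hxq) (by rw [this]; exact id)
      · rintro x (rfl : x = q); exact hq
    simp [hCq]
  · obtain ⟨f, hf⟩ := (Set.Countable.exists_eq_range hr hrne)
    refine ⟨fun n => (closure (V (f n)))ᶜ, fun n => isClosed_closure.isOpen_compl, ?_⟩
    apply Set.Subset.antisymm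
    · refine Set.singleton_subset_iff.2 ⟨hq, Set.mem_iInter.2 fun n => hVq (f n)⟩
    · rintro x ⟨hxC, hx⟩
      by_contra hxq
      have hxY : x ∈ C \ {q} := ⟨hxC, hxq⟩
      have := hrsub hxY
      simp only [Set.mem_iUnion] at this
      obtain ⟨y, hyr, hxV⟩ := this
      have : y ∈ Set.range f := by rw [← hf]; exact hyr
      obtain ⟨n, rfl⟩ := this
      exact (Set.mem_iInter.mp hx n) (subset_closure hxV)

/-! ### The main recursion -/

/-- Specification for a σ-decomposition of the closure of `E` in the co-diagonal together
with separating open neighborhoods of the pieces. -/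
def SpecPO (T : Set X) (E : Set (X × X)) (QO : ℕ → Set (X × X) × Set (X × X)) : Prop :=
  (closure E ∩ codiag X = ⋃ m, (QO m).1) ∧ ∀ n, IsCompact (QO n).1 ∧
    (QO n).1 ⊆ (T ×ˢ T) ∩ codiag X ∧ IsOpen (QO n).2 ∧ (QO n).1 ⊆ (QO n).2 ∧
    closure (QO n).2 ∩ ((T ×ˢ T) ∩ {z : X × X | z.1 = z.2}) = ∅

noncomputable def PO (T : Set X) (E : Set (X × X)) : ℕ → Set (X × X) × Set (X × X) :=
  if h' : ∃ QO, SpecPO T E QO then h'.choose else fun _ => (∅, ∅)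

lemma PO_spec {T : Set X} {E : Set (X × X)} (h' : ∃ QO, SpecPO T E QO) :
    SpecPO T E (PO T E) := by
  rw [PO, dif_pos h']; exact h'.choose_spec

lemma exists_specPO (h : DiscretelySigmaCompact ↥(codiag X)) {T : Set X} (hT : IsCompact T)
    {E : Set (X × X)} (hEsub : E ⊆ (T ×ˢ T) ∩ codiag X)
    (hiso : ∀ e ∈ E, ∃ V, IsOpen V ∧ V ∩ E = {e}) : ∃ QO, SpecPO T E QO := by
  haveI := t2X (X := X)
  obtain ⟨K, hKc, hKsub, hKeq⟩ := sigma_of_discrete_subset h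
    (fun e he => (hEsub he).2) hiso
  have hTT : IsCompact (T ×ˢ T) := hT.prod hT
  have hTTcl : IsClosed (T ×ˢ T) := hTT.isClosed
  have hclE : closure E ⊆ T ×ˢ T :=
    closure_minimal (fun e he => (hEsub he).1) hTTcl
  have hDc : IsCompact ((T ×ˢ T) ∩ {z : X × X | z.1 = z.2}) :=
    hTT.inter_right isClosed_diagonal
  have hsep : ∀ n : ℕ, ∃ O : Set (X × X), IsOpen O ∧ K n ⊆ O ∧
      closure O ∩ ((T ×ˢ T) ∩ {z : X × X | z.1 = z.2}) = ∅ := by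
    intro n
    have hdisj : Disjoint (K n) ((T ×ˢ T) ∩ {z : X × X | z.1 = z.2}) := by
      rw [Set.disjoint_left]
      intro z hzK hzD
      exact (hKsub n hzK) hzD.2
    obtain ⟨O, B, hOo, hBo, hKO, hDB, hOB⟩ :=
      SeparatedNhds.of_isCompact_isCompact (hKc n) hDc hdisj
    refine ⟨O, hOo, hKO, ?_⟩
    rw [Set.eq_empty_iff_forall_notMem]
    rintro z ⟨hzO, hzD⟩
    have : closure O ⊆ Bᶜ :=
      closure_minimal (fun a ha => Set.disjoint_left.mp hOB ha) (isClosed_compl_iff.2 hBo)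
    exact this hzO (hDB hzD)
  choose O hOo hKO hOsep using hsep
  refine ⟨fun n => (K n, O n), ⟨hKeq, fun n => ⟨hKc n, ?_, hOo n, hKO n, hOsep n⟩⟩⟩
  intro z hz
  have hzcl : z ∈ closure E ∩ codiag X := by rw [hKeq]; exact Set.mem_iUnion.2 ⟨n, hz⟩
  exact ⟨hclE hzcl.1, hzcl.2⟩

/-- The set of points constructed before stage `ξ`. -/
def Eof (ξ : Idx.{u}) (ih : ∀ η : Idx.{u}, η < ξ → (X × X) × Set (X × X)) : Set (X × X) :=
  {x | ∃ η, ∃ h : η < ξ, (ih η h).1 = x}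

/-- The σ-compact "avoidance set" at stage `ξ`. -/
def Aof (T : Set X) (ξ : Idx.{u}) (ih : ∀ η : Idx.{u}, η < ξ → (X × X) × Set (X × X)) :
    Set (X × X) :=
    (⋃ η, ⋃ h : η < ξ, closure (ih η h).2 ∩ (T ×ˢ T)) ∪
    ((⋃ η, ⋃ h : η < ξ, ⋃ n,
        closure (PO T (Eof η (fun η' h' => ih η' (h'.trans h))) n).2 ∩ (T ×ˢ T)) ∪
      (⋃ n, closure (PO T (Eof ξ ih) n).2 ∩ (T ×ˢ T)))

noncomputable def stepB (T : Set X) (junk : X × X) (ξ : Idx.{u})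
    (ih : ∀ η : Idx.{u}, η < ξ → (X × X) × Set (X × X)) : (X × X) × Set (X × X) :=
    if hne : (((T ×ˢ T) ∩ codiag X) \ Aof T ξ ih).Nonempty then
      (hne.some,
        if hW : ∃ W, IsOpen W ∧ hne.some ∈ W ∧
            closure W ∩ ((T ×ˢ T) ∩ {z : X × X | z.1 = z.2}) = ∅ ∧
            W ∩ closure (Eof ξ ih) = ∅ then hW.choose else ∅)
    else (junk, ∅)

noncomputable def PB (T : Set X) (junk : X × X) : Idx.{u} → (X × X) × Set (X × X) :=
  (IsWellFounded.wf : WellFounded ((· < ·) : Idx.{u} → Idx.{u} → Prop)).fix (stepB T junk)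

lemma PB_eq (T : Set X) (junk : X × X) (ξ : Idx.{u}) :
    PB T junk ξ = stepB T junk ξ (fun η _ => PB T junk η) :=
  WellFounded.fix_eq _ _ _

/-- The master invariant of the recursion. -/
def MProp (T : Set X) (junk : X × X) (ξ : Idx.{u}) : Prop :=
  (PB T junk ξ).1 ∈ ((T ×ˢ T) ∩ codiag X) \ Aof T ξ (fun η _ => PB T junk η) ∧
  IsOpen (PB T junk ξ).2 ∧ (PB T junk ξ).1 ∈ (PB T junk ξ).2 ∧
  closure (PB T junk ξ).2 ∩ ((T ×ˢ T) ∩ {z : X × X | z.1 = z.2}) = ∅ ∧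
  (PB T junk ξ).2 ∩ closure (Eof ξ (fun η _ => PB T junk η)) = ∅

lemma discE_of_below (T : Set X) (junk : X × X) (ξ : Idx.{u})
    (IH : ∀ η, η < ξ → MProp T junk η) :
    (Eof ξ (fun η _ => PB T junk η) ⊆ (T ×ˢ T) ∩ codiag X) ∧
    (∀ e ∈ Eof ξ (fun η _ => PB T junk η), ∃ V, IsOpen V ∧
        V ∩ Eof ξ (fun η _ => PB T junk η) = {e}) := by
  constructor
  · rintro x ⟨η, hη, rfl⟩
    exact (IH η hη).1.1
  · rintro e ⟨η', hη', rfl⟩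
    refine ⟨(PB T junk η').2, (IH η' hη').2.1, ?_⟩
    apply Set.Subset.antisymm
    · rintro y ⟨hyW, η'', hη'', rfl⟩
      rcases lt_trichotomy η'' η' with hlt | heq | hgt
      · exfalso
        have hmem : (PB T junk η'').1 ∈ Eof η' (fun η _ => PB T junk η) := ⟨η'', hlt, rfl⟩
        have hdisj := (IH η' hη').2.2.2.2
        rw [Set.eq_empty_iff_forall_notMem] at hdisj
        exact hdisj _ ⟨hyW, subset_closure hmem⟩
      · subst heq; rfl
      · exfalso
        apply (IH η'' hη'').1.2
        refine Set.mem_union_left _ ?_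
        exact Set.mem_iUnion.2 ⟨η', Set.mem_iUnion.2
          ⟨hgt, ⟨subset_closure hyW, (IH η'' hη'').1.1.1⟩⟩⟩
    · intro y hy
      rw [Set.mem_singleton_iff] at hy
      subst hy
      exact ⟨(IH η' hη').2.2.1, ⟨η', hη', rfl⟩⟩

lemma masterB (h : DiscretelySigmaCompact ↥(codiag X)) {T : Set X} (hT : IsCompact T)
    (hns : ¬ IsSigmaCompact ((T ×ˢ T) ∩ codiag X)) (junk : X × X) :
    ∀ ξ : Idx.{u}, MProp T junk ξ := by
  haveI := t2X (X := X)
  have hTT : IsCompact (T ×ˢ T) := hT.prod hT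
  have hDc : IsCompact ((T ×ˢ T) ∩ {z : X × X | z.1 = z.2}) :=
    hTT.inter_right isClosed_diagonal
  intro ξ₀
  refine (IsWellFounded.wf : WellFounded ((· < ·) : Idx.{u} → Idx.{u} → Prop)).induction
    (C := fun ξ => MProp T junk ξ) ξ₀ ?_
  intro ξ IH
  have hspecPO : ∀ η : Idx.{u}, η ≤ ξ →
      SpecPO T (Eof η (fun η' _ => PB T junk η'))
        (PO T (Eof η (fun η' _ => PB T junk η'))) := by
    intro η hη
    have hIH' : ∀ η', η' < η → MProp T junk η' := fun η' hη' => IH η' (lt_of_lt_of_le hη' hη)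
    obtain ⟨hsub, hiso⟩ := discE_of_below T junk η hIH'
    exact PO_spec (exists_specPO h hT hsub hiso)
  -- the avoidance set is a countable union of compact subsets of the co-diagonal trace
  have hA : ∃ S : Set (Set (X × X)), S.Countable ∧
      (∀ s ∈ S, IsCompact s ∧ s ⊆ (T ×ˢ T) ∩ codiag X) ∧
      Aof T ξ (fun η _ => PB T junk η) = ⋃₀ S := by
    classical
    refine ⟨((fun η => closure (PB T junk η).2 ∩ (T ×ˢ T)) '' (Set.Iio ξ)) ∪
      (Set.image2 (fun (η : Idx.{u}) (n : ℕ) =>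
        closure (PO T (Eof η (fun η' _ => PB T junk η')) n).2 ∩ (T ×ˢ T))
        (Set.Iio ξ) (Set.univ : Set ℕ) ∪
      ((fun n => closure (PO T (Eof ξ (fun η' _ => PB T junk η')) n).2 ∩ (T ×ˢ T)) ''
        (Set.univ : Set ℕ))), ?_, ?_, ?_⟩
    · exact (((idx_iio_countable ξ).image _).union
        (((idx_iio_countable ξ).image2 countable_univ _).union
          (countable_univ.image _)))
    · rintro s (⟨η, hη, rfl⟩ | ⟨η, hη, n, -, rfl⟩ | ⟨n, -, rfl⟩)
      · constructor
        · exact hTT.inter_left isClosed_closure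
        · rintro z ⟨hzcl, hzTT⟩
          refine ⟨hzTT, fun hzd => ?_⟩
          have := (IH η hη).2.2.2.1
          rw [Set.eq_empty_iff_forall_notMem] at this
          exact this z ⟨hzcl, hzTT, hzd⟩
      · constructor
        · exact hTT.inter_left isClosed_closure
        · rintro z ⟨hzcl, hzTT⟩
          refine ⟨hzTT, fun hzd => ?_⟩
          have := ((hspecPO η (le_of_lt hη)).2 n).2.2.2.2
          rw [Set.eq_empty_iff_forall_notMem] at this
          exact this z ⟨hzcl, hzTT, hzd⟩
      · constructor
        · exact hTT.inter_left isClosed_closure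
        · rintro z ⟨hzcl, hzTT⟩
          refine ⟨hzTT, fun hzd => ?_⟩
          have := ((hspecPO ξ le_rfl).2 n).2.2.2.2
          rw [Set.eq_empty_iff_forall_notMem] at this
          exact this z ⟨hzcl, hzTT, hzd⟩
    · rw [Aof]
      ext z
      simp only [Set.mem_union, Set.mem_iUnion, Set.sUnion_union, Set.mem_sUnion,
        Set.mem_image, Set.mem_image2, Set.mem_Iio, Set.mem_univ, true_and]
      constructor
      · rintro (⟨η, hη, hz⟩ | ⟨η, hη, n, hz⟩ | ⟨n, hz⟩)
        · exact Or.inl ⟨_, ⟨η, hη, rfl⟩, hz⟩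
        · exact Or.inr (Or.inl ⟨_, ⟨η, hη, n, rfl⟩, hz⟩)
        · exact Or.inr (Or.inr ⟨_, ⟨n, rfl⟩, hz⟩)
      · rintro (⟨s, ⟨η, hη, rfl⟩, hz⟩ | ⟨s, ⟨η, hη, n, rfl⟩, hz⟩ | ⟨s, ⟨n, rfl⟩, hz⟩)
        · exact Or.inl ⟨η, hη, hz⟩
        · exact Or.inr (Or.inl ⟨η, hη, n, hz⟩)
        · exact Or.inr (Or.inr ⟨n, hz⟩)
  have hpos : ((((T ×ˢ T) ∩ codiag X)) \ Aof T ξ (fun η _ => PB T junk η)).Nonempty := by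
    by_contra hne
    rw [Set.not_nonempty_iff_eq_empty, Set.diff_eq_empty] at hne
    obtain ⟨S, hSc, hSs, hSeq⟩ := hA
    apply hns
    have hZeq : (T ×ˢ T) ∩ codiag X = ⋃₀ S := by
      apply Set.Subset.antisymm
      · rw [← hSeq]; exact hne
      · rintro z ⟨s, hsS, hzs⟩
        exact (hSs s hsS).2 hzs
    rw [hZeq]
    exact isSigmaCompact_sUnion_of_isCompact hSc (fun s hs => (hSs s hs).1)
  have hWex : ∃ W, IsOpen W ∧ hpos.some ∈ W ∧
      closure W ∩ ((T ×ˢ T) ∩ {z : X × X | z.1 = z.2}) = ∅ ∧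
      W ∩ closure (Eof ξ (fun η _ => PB T junk η)) = ∅ := by
    have hp := hpos.some_mem
    have hpZ : hpos.some ∈ (T ×ˢ T) ∩ codiag X := hp.1
    have hdisj : Disjoint ({hpos.some} : Set (X × X))
        ((T ×ˢ T) ∩ {z : X × X | z.1 = z.2}) := by
      rw [Set.disjoint_left]
      rintro z (rfl : z = hpos.some)
      intro hzD
      exact hpZ.2 hzD.2
    obtain ⟨O, B, hOo, hBo, hpO, hDB, hOB⟩ :=
      SeparatedNhds.of_isCompact_isCompact isCompact_singleton hDc hdisj
    have hOsep : closure O ∩ ((T ×ˢ T) ∩ {z : X × X | z.1 = z.2}) = ∅ := by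
      rw [Set.eq_empty_iff_forall_notMem]
      rintro z ⟨hzO, hzD⟩
      have : closure O ⊆ Bᶜ :=
        closure_minimal (fun a ha => Set.disjoint_left.mp hOB ha) (isClosed_compl_iff.2 hBo)
      exact this hzO (hDB hzD)
    have hpE : hpos.some ∉ closure (Eof ξ (fun η _ => PB T junk η)) := by
      intro hcl
      apply hp.2
      have hspec := hspecPO ξ le_rfl
      have hz : hpos.some ∈ closure (Eof ξ (fun η' _ => PB T junk η')) ∩ codiag X :=
        ⟨hcl, hpZ.2⟩
      rw [hspec.1] at hz
      obtain ⟨n, hn⟩ := Set.mem_iUnion.mp hz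
      refine Set.mem_union_right _ (Set.mem_union_right _ ?_)
      exact Set.mem_iUnion.2 ⟨n, subset_closure ((hspec.2 n).2.2.2.1 hn), hpZ.1⟩
    refine ⟨O ∩ (closure (Eof ξ (fun η _ => PB T junk η)))ᶜ,
      hOo.inter isClosed_closure.isOpen_compl, ⟨hpO rfl, hpE⟩, ?_, ?_⟩
    · rw [Set.eq_empty_iff_forall_notMem]
      rintro z ⟨hzO, hzD⟩
      rw [Set.eq_empty_iff_forall_notMem] at hOsep
      exact hOsep z ⟨closure_mono Set.inter_subset_left hzO, hzD⟩
    · rw [Set.eq_empty_iff_forall_notMem]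
      rintro z ⟨⟨-, hz2⟩, hz3⟩
      exact hz2 hz3
  have heq : PB T junk ξ = (hpos.some, hWex.choose) := by
    rw [PB_eq]
    simp only [stepB]
    rw [dif_pos hpos, dif_pos hWex]
  have hWspec := hWex.choose_spec
  rw [MProp, heq]
  exact ⟨hpos.some_mem, hWspec.1, hWspec.2.1, hWspec.2.2.1, hWspec.2.2.2⟩

/-- Countable relative neighborhood basis at points of compact squares. -/
lemma rel_point_basis (h : DiscretelySigmaCompact ↥(codiag X))
    {T : Set X} (hT : IsCompact T) {q : X × X} (hq : q ∈ T ×ˢ T) :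
    ∃ N : ℕ → Set (X × X), (∀ n, IsOpen (N n)) ∧ (∀ n, q ∈ N n) ∧
      ∀ U, IsOpen U → q ∈ U → ∃ n, N n ∩ (T ×ˢ T) ⊆ U := by
  haveI := t2X (X := X)
  obtain ⟨W₁, hW₁o, hW₁⟩ := gdelta_rel_point h hT hq.1
  obtain ⟨W₂, hW₂o, hW₂⟩ := gdelta_rel_point h hT hq.2
  have hsing : ({q} : Set (X × X)) = (T ×ˢ T) ∩
      ⋂ n, ((W₁ n ×ˢ (Set.univ : Set X)) ∩ ((Set.univ : Set X) ×ˢ W₂ n)) := by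
    ext p
    simp only [Set.mem_singleton_iff, Set.mem_inter_iff, Set.mem_iInter, Set.mem_prod,
      Set.mem_univ, and_true, true_and]
    constructor
    · intro hpq
      rw [hpq]
      refine ⟨⟨hq.1, hq.2⟩, fun n => ⟨?_, ?_⟩⟩
      · have hm : q.1 ∈ T ∩ ⋂ m, W₁ m := by rw [← hW₁]; rfl
        exact Set.mem_iInter.mp hm.2 n
      · have hm : q.2 ∈ T ∩ ⋂ m, W₂ m := by rw [← hW₂]; rfl
        exact Set.mem_iInter.mp hm.2 n
    · rintro ⟨⟨hp1, hp2⟩, hpn⟩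
      have h1 : p.1 ∈ T ∩ ⋂ m, W₁ m := ⟨hp1, Set.mem_iInter.2 fun n => (hpn n).1⟩
      have h2 : p.2 ∈ T ∩ ⋂ m, W₂ m := ⟨hp2, Set.mem_iInter.2 fun n => (hpn n).2⟩
      rw [← hW₁] at h1; rw [← hW₂] at h2
      exact Prod.ext h1 h2
  obtain ⟨V, hVo, hKV, hVb⟩ := rel_nbhd_basis (hT.prod hT) isCompact_singleton
    (fun n => (W₁ n ×ˢ (Set.univ : Set X)) ∩ ((Set.univ : Set X) ×ˢ W₂ n))
    (fun n => ((hW₁o n).prod isOpen_univ).inter (isOpen_univ.prod (hW₂o n))) hsing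
  exact ⟨V, hVo, fun n => hKV n rfl,
    fun U hUo hqU => hVb U hUo (Set.singleton_subset_iff.2 hqU)⟩

/-- The key theorem: the trace of the co-diagonal on any compact square is σ-compact. -/
lemma codiag_trace_sigmaCompact (h : DiscretelySigmaCompact ↥(codiag X))
    {T : Set X} (hT : IsCompact T) :
    IsSigmaCompact ((T ×ˢ T) ∩ codiag X) := by
  haveI := t2X (X := X)
  by_contra hns
  have hZne : ((T ×ˢ T) ∩ codiag X).Nonempty := by
    rcases Set.eq_empty_or_nonempty ((T ×ˢ T) ∩ codiag X) with he | hne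
    · exact absurd (he ▸ isSigmaCompact_empty) hns
    · exact hne
  have master := masterB h hT hns hZne.some
  set junk := hZne.some
  have hPpZ : ∀ ξ : Idx.{u}, (PB T junk ξ).1 ∈ (T ×ˢ T) ∩ codiag X := fun ξ => (master ξ).1.1
  have hPpW : ∀ ξ : Idx.{u}, (PB T junk ξ).1 ∈ (PB T junk ξ).2 := fun ξ => (master ξ).2.2.1
  have hWiso : ∀ η ξ : Idx.{u}, η ≠ ξ → (PB T junk ξ).1 ∉ (PB T junk η).2 := by
    intro η ξ hne'
    rcases lt_or_gt_of_ne hne' with hlt | hgt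
    · intro hmem
      apply (master ξ).1.2
      exact Set.mem_union_left _ (Set.mem_iUnion.2 ⟨η, Set.mem_iUnion.2
        ⟨hlt, subset_closure hmem, (hPpZ ξ).1⟩⟩)
    · intro hmem
      have hdisj := (master η).2.2.2.2
      rw [Set.eq_empty_iff_forall_notMem] at hdisj
      exact hdisj ((PB T junk ξ).1) ⟨hmem, subset_closure ⟨ξ, hgt, rfl⟩⟩
  have hinj : Function.Injective (fun ξ : Idx.{u} => (PB T junk ξ).1) := by
    intro η ξ hEq
    by_contra hne'
    have hEq' : (PB T junk η).1 = (PB T junk ξ).1 := hEq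
    exact hWiso η ξ hne' (hEq' ▸ hPpW η)
  set EI : Set (X × X) := Set.range (fun ξ : Idx.{u} => (PB T junk ξ).1) with hEI
  have hEsub : EI ⊆ (T ×ˢ T) ∩ codiag X := by rintro x ⟨ξ, rfl⟩; exact hPpZ ξ
  have hEiso : ∀ e ∈ EI, ∃ V, IsOpen V ∧ V ∩ EI = {e} := by
    rintro e ⟨ξ, rfl⟩
    refine ⟨(PB T junk ξ).2, (master ξ).2.1, Set.Subset.antisymm ?_ ?_⟩
    · rintro y ⟨hyW, η, rfl⟩
      rw [Set.mem_singleton_iff]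
      by_contra hne'
      have hne'' : ξ ≠ η := fun hh => hne' (by rw [hh])
      exact hWiso ξ η hne'' hyW
    · intro y hy
      rw [Set.mem_singleton_iff] at hy
      subst hy
      exact ⟨hPpW ξ, ⟨ξ, rfl⟩⟩
  have spec := PO_spec (exists_specPO h hT hEsub hEiso)
  have hcover : (Set.univ : Set Idx.{u}) =
      ⋃ n, {ξ : Idx.{u} | (PB T junk ξ).1 ∈ (PO T EI n).1} := by
    ext ξ
    simp only [Set.mem_univ, true_iff, Set.mem_iUnion, Set.mem_setOf_eq]
    have hm : (PB T junk ξ).1 ∈ closure EI ∩ codiag X :=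
      ⟨subset_closure ⟨ξ, rfl⟩, (hPpZ ξ).2⟩
    rw [spec.1] at hm
    exact Set.mem_iUnion.mp hm
  have hJ : ∃ n₀, ¬ {ξ : Idx.{u} | (PB T junk ξ).1 ∈ (PO T EI n₀).1}.Countable := by
    by_contra hall
    push_neg at hall
    apply idx_not_countable.{u}
    rw [hcover]
    exact Set.countable_iUnion hall
  obtain ⟨n₀, hJunc⟩ := hJ
  set J := {ξ : Idx.{u} | (PB T junk ξ).1 ∈ (PO T EI n₀).1} with hJdef
  have hQc : IsCompact (PO T EI n₀).1 := (spec.2 n₀).1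
  have hQZ : (PO T EI n₀).1 ⊆ (T ×ˢ T) ∩ codiag X := (spec.2 n₀).2.1
  have hqex : ∃ q ∈ (PO T EI n₀).1, ∀ N, IsOpen N → q ∈ N →
      ¬ {ξ | ξ ∈ J ∧ (PB T junk ξ).1 ∈ N}.Countable := by
    by_contra hno
    push_neg at hno
    have hN : ∀ q : X × X, ∃ N, IsOpen N ∧
        (q ∈ (PO T EI n₀).1 → q ∈ N ∧ {ξ | ξ ∈ J ∧ (PB T junk ξ).1 ∈ N}.Countable) := by
      intro q
      by_cases hq' : q ∈ (PO T EI n₀).1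
      · obtain ⟨N, hNo, hqN, hNc⟩ := hno q hq'
        exact ⟨N, hNo, fun _ => ⟨hqN, hNc⟩⟩
      · exact ⟨Set.univ, isOpen_univ, fun hc => absurd hc hq'⟩
    choose N hNo hNq using hN
    obtain ⟨t, htQ, htfin, htcov⟩ := hQc.elim_finite_subcover_image
      (fun q _ => hNo q) (fun q hq' => Set.mem_biUnion hq' (hNq q hq').1)
    apply hJunc
    have hJsub : J ⊆ ⋃ q ∈ t, {ξ | ξ ∈ J ∧ (PB T junk ξ).1 ∈ N q} := by
      intro ξ hξ
      obtain ⟨q, hqt, hPq⟩ := Set.mem_iUnion₂.mp (htcov hξ)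
      exact Set.mem_biUnion hqt ⟨hξ, hPq⟩
    exact ((htfin.countable.biUnion (fun q hq' => (hNq q (htQ hq')).2)).mono hJsub)
  obtain ⟨q, hqQ, hqbig⟩ := hqex
  by_cases hstage : ∃ ξ₀ : Idx.{u}, q ∈ closure (Eof ξ₀ (fun η (_ : η < ξ₀) => PB T junk η))
  · obtain ⟨ξ₀, hq₀⟩ := hstage
    have hd := discE_of_below T junk ξ₀ (fun η _ => master η)
    have hspec₀ := PO_spec (exists_specPO h hT hd.1 hd.2)
    have hqc : q ∈ closure (Eof ξ₀ (fun η (_ : η < ξ₀) => PB T junk η)) ∩ codiag X :=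
      ⟨hq₀, (hQZ hqQ).2⟩
    rw [hspec₀.1] at hqc
    obtain ⟨m, hm⟩ := Set.mem_iUnion.mp hqc
    apply hqbig ((PO T (Eof ξ₀ (fun η (_ : η < ξ₀) => PB T junk η)) m).2)
      ((hspec₀.2 m).2.2.1) ((hspec₀.2 m).2.2.2.1 hm)
    apply Set.Countable.mono _ (idx_iic_countable ξ₀)
    rintro ξ ⟨-, hξO⟩
    rw [Set.mem_Iic]
    by_contra hgt
    rw [not_le] at hgt
    apply (master ξ).1.2
    refine Set.mem_union_right _ (Set.mem_union_left _ ?_)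
    exact Set.mem_iUnion.2 ⟨ξ₀, Set.mem_iUnion.2 ⟨hgt, Set.mem_iUnion.2 ⟨m,
      subset_closure hξO, (hPpZ ξ).1⟩⟩⟩
  · push_neg at hstage
    obtain ⟨N, hNo, hNq, hNb⟩ := rel_point_basis h hT (hQZ hqQ).1
    have hpick : ∀ k : ℕ, ∃ ξ, ξ ∈ J ∧ (PB T junk ξ).1 ∈ N k := by
      intro k
      by_contra hcon
      push_neg at hcon
      apply hqbig (N k) (hNo k) (hNq k)
      have hempty : {ξ | ξ ∈ J ∧ (PB T junk ξ).1 ∈ N k} = ∅ := by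
        rw [Set.eq_empty_iff_forall_notMem]
        rintro ξ ⟨hξJ, hξN⟩
        exact hcon ξ hξJ hξN
      rw [hempty]
      exact countable_empty
    choose ζf hζJ hζN using hpick
    obtain ⟨ξs, hξs⟩ := exists_gt_of_countable (Set.countable_range ζf)
    apply hstage ξs
    rw [mem_closure_iff]
    intro V hVo hqV
    obtain ⟨k, hk⟩ := hNb V hVo hqV
    exact ⟨(PB T junk (ζf k)).1, hk ⟨hζN k, (hPpZ (ζf k)).1⟩,
      ⟨ζf k, hξs _ ⟨k, rfl⟩, rfl⟩⟩

/-- Oscillation: a countable relative basis for `T` gives one for `T ×ˢ T`. -/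
lemma prod_rel_basis {T : Set X} {B : Set (Set X)} (hBc : B.Countable)
    (hBo : ∀ b ∈ B, IsOpen b)
    (hbasis : ∀ x ∈ T, ∀ U, IsOpen U → x ∈ U → ∃ b ∈ B, x ∈ b ∧ b ∩ T ⊆ U) :
    ∃ B₂ : Set (Set (X × X)), B₂.Countable ∧
      ∀ z ∈ T ×ˢ T, ∀ U : Set (X × X), IsOpen U → z ∈ U →
        ∃ b ∈ B₂, z ∈ b ∧ b ∩ (T ×ˢ T) ⊆ U := by
  refine ⟨Set.image2 (fun b₁ b₂ => b₁ ×ˢ b₂) B B, hBc.image2 hBc _, ?_⟩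
  rintro z ⟨hz1, hz2⟩ U hUo hzU
  obtain ⟨G, H, hGo, hHo, hzG, hzH, hGH⟩ := isOpen_prod_iff.mp hUo z.1 z.2 hzU
  obtain ⟨b₁, hb₁B, hzb₁, hb₁⟩ := hbasis z.1 hz1 G hGo hzG
  obtain ⟨b₂, hb₂B, hzb₂, hb₂⟩ := hbasis z.2 hz2 H hHo hzH
  refine ⟨b₁ ×ˢ b₂, Set.mem_image2_of_mem hb₁B hb₂B, ⟨hzb₁, hzb₂⟩, ?_⟩
  rintro w ⟨⟨hw1, hw2⟩, hwT1, hwT2⟩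
  exact hGH ⟨hb₁ ⟨hw1, hwT1⟩, hb₂ ⟨hw2, hwT2⟩⟩

/-- The main theorem, internal version. -/
theorem main_theorem (h : DiscretelySigmaCompact ↥(codiag X)) (t : Set (X × X)) :
    IsLindelof t := by
  haveI := t2X (X := X)
  classical
  by_contra hnl
  obtain ⟨p, U, hpt, hUo, hpU, hsep⟩ := exists_rightSep hnl
  set J₁ : Set Idx.{u} := {ξ | p ξ ∈ codiag X} with hJ₁
  set J₂ : Set Idx.{u} := {ξ | p ξ ∉ codiag X} with hJ₂
  have huniv : (Set.univ : Set Idx.{u}) = J₁ ∪ J₂ := by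
    ext ξ; simp only [Set.mem_univ, true_iff, Set.mem_union, Set.mem_setOf_eq]; tauto
  have hone : ¬ J₁.Countable ∨ ¬ J₂.Countable := by
    by_contra hc
    push_neg at hc
    exact idx_not_countable.{u} (by rw [huniv]; exact hc.1.union hc.2)
  rcases hone with hJ₁unc | hJ₂unc
  · -- off-diagonal case
    set S : Set (X × X) := p '' J₁ with hS
    set D : Set (X × X) := {a | a ∈ S ∧ ∃ V, IsOpen V ∧ V ∩ S = {a}} with hD
    have hsubcl : S ⊆ closure D :=
      subset_closure_iso hUo (fun ξ _ => hpU ξ) (fun η _ ξ _ hlt => hsep η ξ hlt)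
    have hDiso : ∀ a ∈ D, ∃ V, IsOpen V ∧ V ∩ D = {a} := by
      intro a ha
      obtain ⟨haS, V, hVo, hVS⟩ := ha
      refine ⟨V, hVo, Set.Subset.antisymm ?_ ?_⟩
      · intro y hy
        have : y ∈ V ∩ S := ⟨hy.1, hy.2.1⟩
        rw [hVS] at this; exact this
      · intro y hy
        rw [Set.mem_singleton_iff] at hy
        subst hy
        have haV : y ∈ V := by
          have : y ∈ V ∩ S := by rw [hVS]; rfl
          exact this.1
        exact ⟨haV, haS, V, hVo, hVS⟩
    have hDsub : D ⊆ codiag X := by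
      rintro a ⟨haS, -⟩
      obtain ⟨ξ, hξ, rfl⟩ := haS
      exact hξ
    obtain ⟨K, hKc, hKsub, hKeq⟩ := sigma_of_discrete_subset h hDsub hDiso
    have hScover : S ⊆ ⋃ n, K n := by
      intro z hz
      rw [← hKeq]
      obtain ⟨ξ, hξ, rfl⟩ := hz
      exact ⟨hsubcl (Set.mem_image_of_mem p hξ), hξ⟩
    have hJ₄ : ∃ n₀, ¬ {ξ | ξ ∈ J₁ ∧ p ξ ∈ K n₀}.Countable := by
      by_contra hall
      push_neg at hall
      apply hJ₁unc
      have : J₁ ⊆ ⋃ n, {ξ | ξ ∈ J₁ ∧ p ξ ∈ K n} := by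
        intro ξ hξ
        obtain ⟨n, hn⟩ := Set.mem_iUnion.mp (hScover (Set.mem_image_of_mem p hξ))
        exact Set.mem_iUnion.2 ⟨n, hξ, hn⟩
      exact (Set.countable_iUnion hall).mono this
    obtain ⟨n₀, hJ₄unc⟩ := hJ₄
    set T : Set X := (Prod.fst '' K n₀) ∪ (Prod.snd '' K n₀) with hT
    have hTc : IsCompact T := ((hKc n₀).image continuous_fst).union ((hKc n₀).image continuous_snd)
    have hKT : K n₀ ⊆ T ×ˢ T := by
      rintro ⟨a, b⟩ hab
      exact ⟨Set.mem_union_left _ ⟨(a, b), hab, rfl⟩,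
        Set.mem_union_right _ ⟨(a, b), hab, rfl⟩⟩
    have hσ := codiag_trace_sigmaCompact h hTc
    obtain ⟨Q, hQc, hQeq⟩ := hσ
    obtain ⟨B, hBc, hBo, hB⟩ := rel_countable_basis hTc Q hQc hQeq.symm
    obtain ⟨B₂, hB₂c, hB₂⟩ := prod_rel_basis hBc hBo hB
    have hYsub : p '' {ξ | ξ ∈ J₁ ∧ p ξ ∈ K n₀} ⊆ T ×ˢ T := by
      rintro z ⟨ξ, ⟨-, hξK⟩, rfl⟩
      exact hKT hξK
    have hLin : IsLindelof (p '' {ξ | ξ ∈ J₁ ∧ p ξ ∈ K n₀}) :=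
      lindelof_of_rel_basis hB₂c hB₂ hYsub
    exact not_lindelof_of_rightSep hJ₄unc hUo (fun ξ _ => hpU ξ)
      (fun η _ ξ _ hlt => hsep η ξ hlt) hLin
  · -- diagonal case
    have hdiag : ∀ ξ ∈ J₂, (p ξ).1 = (p ξ).2 := by
      intro ξ hξ
      by_contra hne'
      exact hξ hne'
    set x : Idx.{u} → X := fun ξ => (p ξ).1 with hx
    have hbox : ∀ ξ : Idx.{u}, ∃ V : Set X, IsOpen V ∧
        (ξ ∈ J₂ → (x ξ ∈ V ∧ ∀ z : X, z ∈ V → (z, z) ∈ U ξ)) := by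
      intro ξ
      by_cases hξ : ξ ∈ J₂
      · obtain ⟨G, H, hGo, hHo, hG, hH, hGH⟩ :=
          isOpen_prod_iff.mp (hUo ξ) (p ξ).1 (p ξ).2 (hpU ξ)
        refine ⟨G ∩ H, hGo.inter hHo, fun _ => ⟨⟨hG, ?_⟩, fun z hz => hGH ⟨hz.1, hz.2⟩⟩⟩
        show (p ξ).1 ∈ H
        rw [hdiag ξ hξ]; exact hH
      · exact ⟨∅, isOpen_empty, fun hc => absurd hc hξ⟩
    choose V hVo hVx using hbox
    have hmem' : ∀ ξ ∈ J₂, x ξ ∈ V ξ := fun ξ hξ => (hVx ξ hξ).1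
    have hsep' : ∀ η ∈ J₂, ∀ ξ ∈ J₂, η < ξ → x ξ ∉ V η := by
      intro η hη ξ hξ hlt hmem
      apply hsep η ξ hlt
      have : ((x ξ), (x ξ)) ∈ U η := (hVx η hη).2 (x ξ) hmem
      have hpξ : p ξ = (x ξ, x ξ) := Prod.ext rfl (hdiag ξ hξ).symm
      rw [hpξ]; exact this
    -- now run the X-level argument
    set S : Set X := x '' J₂ with hS
    set D : Set X := {a | a ∈ S ∧ ∃ W, IsOpen W ∧ W ∩ S = {a}} with hD
    have hsubcl : S ⊆ closure D := subset_closure_iso hVo hmem' hsep'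
    have hDiso : ∀ a ∈ D, ∃ W, IsOpen W ∧ W ∩ D = {a} := by
      intro a ha
      obtain ⟨haS, W, hWo, hWS⟩ := ha
      refine ⟨W, hWo, Set.Subset.antisymm ?_ ?_⟩
      · intro y hy
        have : y ∈ W ∩ S := ⟨hy.1, hy.2.1⟩
        rw [hWS] at this; exact this
      · intro y hy
        rw [Set.mem_singleton_iff] at hy
        subst hy
        have haW : y ∈ W := by
          have : y ∈ W ∩ S := by rw [hWS]; rfl
          exact this.1
        exact ⟨haW, haS, W, hWo, hWS⟩
    obtain ⟨hEsub, hEiso, hEcl⟩ := pairs_lemma (X := X) hDiso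
    obtain ⟨K, hKc, hKsub, hKeq⟩ := sigma_of_discrete_subset h hEsub hEiso
    rw [hEcl] at hKeq
    -- D is nonempty (otherwise S is empty, contradicting uncountability of J₂)
    have hSne : S.Nonempty := by
      obtain ⟨ξ, hξ⟩ := Set.nonempty_iff_ne_empty.2
        (fun (he : J₂ = ∅) => hJ₂unc (by rw [he]; exact countable_empty))
      exact ⟨x ξ, Set.mem_image_of_mem x hξ⟩
    have hDne : D.Nonempty := by
      rcases Set.eq_empty_or_nonempty D with he | hne
      · exfalso
        obtain ⟨s, hs⟩ := hSne
        have := hsubcl hs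
        rw [he, closure_empty] at this
        exact this
      · exact hne
    obtain ⟨y₀, hy₀D⟩ := hDne
    have hy₀F : y₀ ∈ closure D := subset_closure hy₀D
    -- slices
    set C : ℕ → Set X := fun n =>
      Prod.fst '' (K n ∩ ((Set.univ : Set X) ×ˢ ({y₀} : Set X))) with hC
    have hCc : ∀ n, IsCompact (C n) := fun n =>
      (((hKc n).inter_right (isClosed_univ.prod isClosed_singleton)).image continuous_fst)
    have hFcov : ∀ z ∈ closure D, z ≠ y₀ → ∃ n, z ∈ C n := by
      intro z hz hzny
      have : (z, y₀) ∈ (closure D ×ˢ closure D) ∩ codiag X := ⟨⟨hz, hy₀F⟩, hzny⟩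
      rw [hKeq] at this
      obtain ⟨n, hn⟩ := Set.mem_iUnion.mp this
      exact ⟨n, (z, y₀), ⟨hn, Set.mem_univ _, rfl⟩, rfl⟩
    -- pigeonhole over J₂
    have hxinj : ∀ η ∈ J₂, ∀ ξ ∈ J₂, η < ξ → x ξ ≠ x η := by
      intro η hη ξ hξ hlt heq'
      exact hsep' η hη ξ hξ hlt (heq' ▸ hmem' η hη)
    have hJ₅ : ∃ n₀, ¬ {ξ | ξ ∈ J₂ ∧ x ξ ∈ C n₀}.Countable := by
      by_contra hall
      push_neg at hall
      apply hJ₂unc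
      have hsubJ : J₂ ⊆ {ξ | ξ ∈ J₂ ∧ x ξ = y₀} ∪ ⋃ n, {ξ | ξ ∈ J₂ ∧ x ξ ∈ C n} := by
        intro ξ hξ
        by_cases hxy : x ξ = y₀
        · exact Set.mem_union_left _ ⟨hξ, hxy⟩
        · obtain ⟨n, hn⟩ := hFcov (x ξ) (hsubcl (Set.mem_image_of_mem x hξ)) hxy
          exact Set.mem_union_right _ (Set.mem_iUnion.2 ⟨n, hξ, hn⟩)
      have hfirst : {ξ | ξ ∈ J₂ ∧ x ξ = y₀}.Countable := by
        apply Set.Subsingleton.countable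
        rintro η ⟨hη, hηy⟩ ξ ⟨hξ, hξy⟩
        by_contra hne'
        rcases lt_or_gt_of_ne hne' with hlt | hgt
        · exact hxinj η hη ξ hξ hlt (by rw [hηy, hξy])
        · exact hxinj ξ hξ η hη hgt (by rw [hηy, hξy])
      exact (hfirst.union (Set.countable_iUnion hall)).mono hsubJ
    obtain ⟨n₀, hJ₅unc⟩ := hJ₅
    have hLin : IsLindelof (x '' {ξ | ξ ∈ J₂ ∧ x ξ ∈ C n₀}) := by
      apply compact_subsets_lindelof h (hCc n₀)
      rintro z ⟨ξ, ⟨-, hξC⟩, rfl⟩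
      exact hξC
    exact not_lindelof_of_rightSep hJ₅unc hVo
      (fun ξ hξ => hmem' ξ hξ.1)
      (fun η hη ξ hξ hlt => hsep' η hη.1 ξ hξ.1 hlt) hLin

end Main
end CodiagProof

/-- If `X` is Tychonoff and its co-diagonal is discretely σ-compact, then
`X × X` is hereditarily Lindelöf. -/
theorem codiag_discretelySigmaCompact_hereditarilyLindelof
    (X : Type u) [TopologicalSpace X] [T1Space X] [CompletelyRegularSpace X]
    (h : DiscretelySigmaCompact ↥(codiag X)) :
    HereditarilyLindelofSpace (X × X) := by
  refine ⟨fun t _ => ?_⟩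
  exact CodiagProof.main_theorem h t
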